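/- Let k ≥ 1 be an integer, let t_1, …, t_k ∈ ℝ, let T ≥ 1 and A > 0 be real numbers, and let {R_i}_{i∈I} be a finite family of axis-parallel rectangles R_i = [a_i, b_i] × [0, h_i] in the plane such that for every i: 0 ≤ h_i ≤ 1, b_i − a_i ≤ T, (b_i − a_i)·h_i ≤ A, and the base interval [a_i, b_i] contains at least one of the points t_1, …, t_k. Then the two-dimensional Lebesgue measure of ⋃_{i∈I} R_i is at most 2k·A·(log₂(max(T/A, 1)) + 2). -/

import Mathlib

open MeasureTheory Set
open scoped ENNReal

lemma vol_rect (c d e : ℝ) :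
    volume (Icc c d ×ˢ Icc (0:ℝ) e) = ENNReal.ofReal (d - c) * ENNReal.ofReal e := by
  rw [MeasureTheory.Measure.volume_eq_prod, Measure.prod_prod, Real.volume_Icc,
    Real.volume_Icc, sub_zero]

lemma dyadic_loc {u : ℝ} : ∀ {M : ℕ}, 1 ≤ u → u ≤ 2 ^ M → 1 ≤ M →
    ∃ m < M, (2:ℝ) ^ m ≤ u ∧ u ≤ 2 ^ (m + 1) := by
  intro M
  induction M with
  | zero => intro _ _ h; omega
  | succ n ih =>
    intro h1 h2 _
    rcases Nat.eq_zero_or_pos n with hn | hn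
    · subst hn
      exact ⟨0, by omega, by simpa using h1, by simpa using h2⟩
    · by_cases hu : u ≤ 2 ^ n
      · obtain ⟨m, hm, h⟩ := ih h1 hu hn
        exact ⟨m, by omega, h⟩
      · exact ⟨n, by omega, le_of_not_ge hu, h2⟩

theorem stmt_7 {ι : Type*} (s : Finset ι) (k : ℕ) (hk : 1 ≤ k) (t : Fin k → ℝ)
    (T A : ℝ) (hT : 1 ≤ T) (hA : 0 < A)
    (a b h : ι → ℝ)
    (hh : ∀ i ∈ s, 0 ≤ h i ∧ h i ≤ 1)
    (hwidth : ∀ i ∈ s, b i - a i ≤ T)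
    (harea : ∀ i ∈ s, (b i - a i) * h i ≤ A)
    (hwitness : ∀ i ∈ s, ∃ j : Fin k, a i ≤ t j ∧ t j ≤ b i) :
    volume (⋃ i ∈ s, Icc (a i) (b i) ×ˢ Icc (0 : ℝ) (h i))
      ≤ ENNReal.ofReal (2 * k * A * (Real.logb 2 (max (T / A) 1) + 2)) := by
  set L := Real.logb 2 (max (T / A) 1) with hL
  have hL0 : 0 ≤ L := Real.logb_nonneg one_lt_two (le_max_right _ _)
  set M := ⌈L⌉₊ with hMdef
  have hMle : (M : ℝ) ≤ L + 1 := le_of_lt (Nat.ceil_lt_add_one hL0)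
  have hT2M : T ≤ A * 2 ^ M := by
    have hmax : max (T / A) 1 ≤ (2:ℝ) ^ (M:ℝ) := by
      rw [← Real.logb_le_iff_le_rpow one_lt_two
        (lt_of_lt_of_le one_pos (le_max_right _ _))]
      exact Nat.le_ceil _
    rw [Real.rpow_natCast] at hmax
    have : T / A ≤ 2 ^ M := le_trans (le_max_left _ _) hmax
    calc T = A * (T / A) := by field_simp
    _ ≤ A * 2 ^ M := by nlinarith
  set P : Fin k → Set (ℝ × ℝ) := fun j => Icc (t j - A) (t j + A) ×ˢ Icc (0:ℝ) 1 with hP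
  set Q : Fin k → ℕ → Set (ℝ × ℝ) := fun j m =>
    (Icc (t j - A * 2 ^ (m+1)) (t j - A * 2 ^ m) ×ˢ Icc (0:ℝ) ((2:ℝ)^m)⁻¹) ∪
    (Icc (t j + A * 2 ^ m) (t j + A * 2 ^ (m+1)) ×ˢ Icc (0:ℝ) ((2:ℝ)^m)⁻¹) with hQ
  have hsub : (⋃ i ∈ s, Icc (a i) (b i) ×ˢ Icc (0 : ℝ) (h i))
      ⊆ ⋃ j : Fin k, (P j ∪ ⋃ m ∈ Finset.range M, Q j m) := by
    intro p hp
    simp only [mem_iUnion] at hp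
    obtain ⟨i, hi, hpi⟩ := hp
    obtain ⟨j, hja, hjb⟩ := hwitness i hi
    obtain ⟨hx, hy⟩ := hpi
    obtain ⟨hh0, hh1⟩ := hh i hi
    simp only [mem_Icc] at hx hy
    have hy0 : 0 ≤ p.2 := hy.1
    have hy1 : p.2 ≤ 1 := le_trans hy.2 hh1
    refine mem_iUnion.2 ⟨j, ?_⟩
    set u := |t j - p.1| with hu
    have hub : u ≤ b i - a i := by
      rcases abs_cases (t j - p.1) with ⟨he, _⟩ | ⟨he, _⟩ <;> rw [hu, he] <;>
        [linarith [hx.1, hx.2]; linarith [hx.1, hx.2]]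
    by_cases hcase : u ≤ A
    · left
      have := abs_le.1 (hu ▸ hcase : |t j - p.1| ≤ A)
      exact ⟨by constructor <;> [linarith [this.2]; linarith [this.1]],
        by exact ⟨hy0, hy1⟩⟩
    · right
      push_neg at hcase
      have hu0 : 0 < u := lt_trans hA hcase
      have huA : 1 ≤ u / A := by rw [le_div_iff₀ hA]; linarith
      have huA2 : u / A ≤ 2 ^ M := by
        rw [div_le_iff₀ hA]
        have : u ≤ T := le_trans hub (hwidth i hi)
        linarith [hT2M]
      have hM1 : 1 ≤ M := by
        by_contra hc
        push_neg at hc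
        interval_cases M
        simp at huA2
        have : u / A > 1 := by rw [gt_iff_lt, lt_div_iff₀ hA]; linarith
        linarith
      obtain ⟨m, hmM, hm1, hm2⟩ := dyadic_loc huA huA2 hM1
      have hm1' : A * 2 ^ m ≤ u := by
        rw [le_div_iff₀ hA] at hm1; linarith
      have hm2' : u ≤ A * 2 ^ (m+1) := by
        rw [div_le_iff₀ hA] at hm2; linarith
      have hwid : A * 2 ^ m ≤ b i - a i := le_trans hm1' hub
      have hwid0 : (0:ℝ) < b i - a i := lt_of_lt_of_le (by positivity) hwid
      have hhb : h i ≤ ((2:ℝ)^m)⁻¹ := by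
        have h1 : (b i - a i) * h i ≤ A := harea i hi
        rw [inv_eq_one_div, le_div_iff₀ (by positivity : (0:ℝ) < 2 ^ m)]
        nlinarith [mul_le_mul_of_nonneg_right hwid hh0]
      rw [hu] at hm1' hm2'
      refine mem_iUnion.2 ⟨m, mem_iUnion.2 ⟨Finset.mem_range.2 hmM, ?_⟩⟩
      rcases abs_cases (t j - p.1) with ⟨he, _⟩ | ⟨he, _⟩
      · rw [he] at hm1' hm2'
        exact Or.inl ⟨⟨by linarith, by linarith⟩, hy0, le_trans hy.2 hhb⟩
      · rw [he] at hm1' hm2'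
        exact Or.inr ⟨⟨by linarith, by linarith⟩, hy0, le_trans hy.2 hhb⟩
  have hvolP : ∀ j, volume (P j) = ENNReal.ofReal (2 * A) := by
    intro j
    rw [hP]
    simp only
    rw [vol_rect]
    rw [ENNReal.ofReal_one, mul_one]
    congr 1
    ring
  have hvolQ : ∀ j m, volume (Q j m) ≤ ENNReal.ofReal (2 * A) := by
    intro j m
    have hrect : ∀ c d : ℝ, d - c = A * 2 ^ m →
        volume (Icc c d ×ˢ Icc (0:ℝ) ((2:ℝ)^m)⁻¹) = ENNReal.ofReal A := by
      intro c d hcd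
      rw [vol_rect, hcd, ← ENNReal.ofReal_mul (by positivity)]
      congr 1
      field_simp
    calc volume (Q j m) ≤ volume (Icc (t j - A * 2 ^ (m+1)) (t j - A * 2 ^ m)
          ×ˢ Icc (0:ℝ) ((2:ℝ)^m)⁻¹)
        + volume (Icc (t j + A * 2 ^ m) (t j + A * 2 ^ (m+1)) ×ˢ Icc (0:ℝ) ((2:ℝ)^m)⁻¹) :=
        measure_union_le _ _
      _ = ENNReal.ofReal A + ENNReal.ofReal A := by
          rw [hrect _ _ (by ring), hrect _ _ (by ring)]
      _ = ENNReal.ofReal (2 * A) := by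
          rw [← ENNReal.ofReal_add hA.le hA.le]; congr 1; ring
  have hbound : volume (⋃ i ∈ s, Icc (a i) (b i) ×ˢ Icc (0 : ℝ) (h i))
      ≤ (k : ℝ≥0∞) * ((M + 1 : ℕ) * ENNReal.ofReal (2 * A)) := by
    calc volume (⋃ i ∈ s, Icc (a i) (b i) ×ˢ Icc (0 : ℝ) (h i))
        ≤ volume (⋃ j : Fin k, (P j ∪ ⋃ m ∈ Finset.range M, Q j m)) := measure_mono hsub
      _ ≤ ∑ j : Fin k, volume (P j ∪ ⋃ m ∈ Finset.range M, Q j m) :=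
        measure_iUnion_fintype_le _ _
      _ ≤ ∑ j : Fin k, ((M + 1 : ℕ) * ENNReal.ofReal (2 * A)) := by
          refine Finset.sum_le_sum fun j _ => ?_
          calc volume (P j ∪ ⋃ m ∈ Finset.range M, Q j m)
              ≤ volume (P j) + volume (⋃ m ∈ Finset.range M, Q j m) := measure_union_le _ _
            _ ≤ ENNReal.ofReal (2 * A) + ∑ m ∈ Finset.range M, volume (Q j m) := by
                rw [hvolP]
                exact add_le_add_right (measure_biUnion_finset_le _ _) _
            _ ≤ ENNReal.ofReal (2 * A) + ∑ m ∈ Finset.range M, ENNReal.ofReal (2 * A) :=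
                add_le_add_right (Finset.sum_le_sum fun m _ => hvolQ j m) _
            _ = (M + 1 : ℕ) * ENNReal.ofReal (2 * A) := by
                rw [Finset.sum_const, Finset.card_range, nsmul_eq_mul]
                push_cast
                ring
      _ = (k : ℝ≥0∞) * ((M + 1 : ℕ) * ENNReal.ofReal (2 * A)) := by
          rw [Finset.sum_const, Finset.card_univ, Fintype.card_fin, nsmul_eq_mul]
  refine le_trans hbound ?_
  have heq : (k : ℝ≥0∞) * ((M + 1 : ℕ) * ENNReal.ofReal (2 * A))
      = ENNReal.ofReal ((k : ℝ) * ((M + 1 : ℝ) * (2 * A))) := by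
    rw [← ENNReal.ofReal_natCast k, ← ENNReal.ofReal_natCast (M + 1),
      ← ENNReal.ofReal_mul (by positivity : (0:ℝ) ≤ ((M + 1 : ℕ) : ℝ)),
      ← ENNReal.ofReal_mul (by positivity)]
    congr 1
    push_cast
    ring
  rw [heq]
  apply ENNReal.ofReal_le_ofReal
  have hk1 : (1:ℝ) ≤ (k:ℝ) := by exact_mod_cast hk
  nlinarith [hMle, hL0, hA.le, mul_le_mul_of_nonneg_left hMle (mul_nonneg (by linarith : (0:ℝ) ≤ 2 * k) hA.le)]
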